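/- arXiv:2406.15929 — 3 statements merged into one kernel-verified Lean document; each statement's English description precedes it below -/
import Mathlib

section
/- Let μ ∈ (ℂ∖ℤ)^n and let λ ∈ (1/2+ℤ)^n be a dominant so(2n)-weight. For every γ ∈ {ω(T(W)) : T(W) ∈ B(μ,λ)}, the set {T(W) ∈ B(μ,λ) : ω(T(W)) = γ} is finite and 2^{n−1} · #{T(W) ∈ B(μ,λ) : ω(T(W)) = γ} = #D_st^λ. -/
open scoped BigOperators Classical

noncomputable section

namespace GTpaper

/-- `a - b ∈ ℤ≥0`, the integer-shift order `a ≥ b` on `ℂ`. -/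
def IntGE (a b : ℂ) : Prop := ∃ m : ℕ, a = b + m

/-- `a - b ∈ ℤ>0`, the strict integer-shift order `a > b` on `ℂ`. -/
def IntGT (a b : ℂ) : Prop := ∃ m : ℕ, a = b + m + 1

/-- `a ∈ ℤ` as a subset of `ℂ`. -/
def IsInt (a : ℂ) : Prop := ∃ m : ℤ, a = m

/-- `a ∈ 1/2 + ℤ` as a subset of `ℂ`. -/
def IsHalfInt (a : ℂ) : Prop := ∃ m : ℤ, a = (m : ℂ) + 1 / 2

/-- A tableau: a doubly indexed family of unprimed entries `u k i` (`ℓ_{ki}`) and primed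
entries `p k i` (`ℓ'_{ki}`).  Only positions with `1 ≤ i ≤ k ≤ n` (resp. `2 ≤ i` for the primed
entries of type-`D` tableaux) are relevant; normalization predicates below set the rest to `0`. -/
structure Tab (R : Type*) where
  u : ℕ → ℕ → R
  p : ℕ → ℕ → R

instance : Add (Tab ℤ) :=
  ⟨fun a b => ⟨fun k i => a.u k i + b.u k i, fun k i => a.p k i + b.p k i⟩⟩

instance : Neg (Tab ℤ) := ⟨fun a => ⟨fun k i => -a.u k i, fun k i => -a.p k i⟩⟩

/-- Add an integer tableau `Z` to a tableau `L`. -/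
def Tab.addZ {R : Type*} [Ring R] (L : Tab R) (Z : Tab ℤ) : Tab R :=
  ⟨fun k i => L.u k i + (Z.u k i : R), fun k i => L.p k i + (Z.p k i : R)⟩

/-- `δ^{(k i)}`: the integer tableau with a single `1` at unprimed position `(k,i)`. -/
def deltaU (k i : ℕ) : Tab ℤ :=
  ⟨fun a b => if a = k ∧ b = i then 1 else 0, fun _ _ => 0⟩

/-- `δ^{(k i)'}`: the integer tableau with a single `1` at primed position `(k,i)`. -/
def deltaP (k i : ℕ) : Tab ℤ :=
  ⟨fun _ _ => 0, fun a b => if a = k ∧ b = i then 1 else 0⟩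

section Coeffs

variable {F : Type*} [Field F]

/-- `ω_k(L)`, the `k`-th component of the `C`-weight of a type-`C` tableau. -/
def wt (k : ℕ) (L : Tab F) : F :=
  2 * (∑ i ∈ Finset.Icc 1 k, L.p k i) - (∑ i ∈ Finset.Icc 1 k, L.u k i) -
    (∑ i ∈ Finset.Icc 1 (k - 1), L.u (k - 1) i) + (k : F) - 1 / 2

/-- `A_{ki}(L)`. -/
def coA (k i : ℕ) (L : Tab F) : F :=
  ∏ a ∈ (Finset.Icc 1 k).erase i, (L.p k a - L.p k i)⁻¹

/-- `B_{ki}(L)`. -/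
def coB (k i : ℕ) (L : Tab F) : F :=
  2 * coA k i L * (2 * L.p k i - 1) * (∏ a ∈ Finset.Icc 1 k, (L.u k a - L.p k i)) *
    ∏ a ∈ Finset.Icc 1 (k - 1), (L.u (k - 1) a - L.p k i)

/-- `C_{ki}(L)`. -/
def coC (k i : ℕ) (L : Tab F) : F :=
  (2 * L.u (k - 1) i - 1)⁻¹ *
    ∏ a ∈ (Finset.Icc 1 (k - 1)).erase i,
      ((L.u (k - 1) i - L.u (k - 1) a) * (L.u (k - 1) i + L.u (k - 1) a - 1))⁻¹

/-- `D_{kijm}(L)`. -/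
def coD (k i j m : ℕ) (L : Tab F) : F :=
  coA k i L * coA (k - 1) m L * coC k j L *
    (∏ a ∈ (Finset.Icc 1 k).erase i, (L.u (k - 1) j ^ 2 - L.p k a ^ 2)) *
    ∏ a ∈ (Finset.Icc 1 (k - 1)).erase m, (L.u (k - 1) j ^ 2 - L.p (k - 1) a ^ 2)

end Coeffs

/-- The `C`-weight `ω(T(L)) ∈ ℂ^n` of a type-`C` tableau. -/
def cwtv (n : ℕ) (T : Tab ℂ) : Fin n → ℂ := fun k => wt ((k : ℕ) + 1) T

/-- A type-`C` tableau is `C`-standard (conditions (7) and (8)). -/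
def IsCStandard (n : ℕ) (T : Tab ℂ) : Prop :=
  ∀ k, 1 ≤ k → k ≤ n →
    (IntGE (-(1 / 2)) (T.p k 1) ∧
      (∀ i, 1 ≤ i → i ≤ k → IntGE (T.p k i) (T.u k i)) ∧
      (∀ i, 1 ≤ i → i + 1 ≤ k → IntGT (T.u k i) (T.p k (i + 1))) ∧
      (2 ≤ k →
        (∀ i, 1 ≤ i → i ≤ k - 1 → IntGE (T.p k i) (T.u (k - 1) i)) ∧
        (∀ i, 1 ≤ i → i ≤ k - 1 → IntGT (T.u (k - 1) i) (T.p k (i + 1)))))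

/-- A type-`D` tableau is `D`-standard (conditions (5) and (6)); primed entries `p k 1`
are irrelevant. -/
def IsDStandard (n : ℕ) (T : Tab ℂ) : Prop :=
  ∀ k, 2 ≤ k → k ≤ n →
    (IntGE (-T.p k 2) (T.u k 1) ∧
      (∀ i, 2 ≤ i → i ≤ k → IntGE (T.p k i) (T.u k i)) ∧
      (∀ i, 1 ≤ i → i + 1 ≤ k → IntGT (T.u k i) (T.p k (i + 1))) ∧
      IntGE (-T.p k 2) (T.u (k - 1) 1) ∧
      (∀ i, 2 ≤ i → i ≤ k - 1 → IntGE (T.p k i) (T.u (k - 1) i)) ∧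
      (∀ i, 1 ≤ i → i ≤ k - 1 → IntGT (T.u (k - 1) i) (T.p k (i + 1))))

/-- `C`-regularity of a type-`C` tableau. -/
def IsCRegular (n : ℕ) (T : Tab ℂ) : Prop :=
  (∀ k i a, 1 ≤ i → i ≤ k → 1 ≤ a → a ≤ k → k ≤ n → i ≠ a → T.p k a ≠ T.p k i) ∧
  (∀ k i a, 1 ≤ i → i ≤ k → 1 ≤ a → a ≤ k → k ≤ n - 1 → i ≠ a → T.u k a ≠ T.u k i) ∧
  (∀ k i a, 1 ≤ i → i ≤ k → 1 ≤ a → a ≤ k → k ≤ n - 1 → i ≠ a → T.u k a + T.u k i ≠ 1) ∧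
  (∀ k i, 1 ≤ i → i ≤ k → k ≤ n - 1 → T.u k i ≠ 1 / 2)

/-- `C`-genericity of a type-`C` tableau. -/
def IsCGeneric (n : ℕ) (T : Tab ℂ) : Prop :=
  (∀ k i a, 1 ≤ i → i ≤ k → 1 ≤ a → a ≤ k → k ≤ n → i ≠ a → ¬IsInt (T.p k a - T.p k i)) ∧
  (∀ k i a, 1 ≤ i → i ≤ k → 1 ≤ a → a ≤ k → k ≤ n - 1 → i ≠ a → ¬IsInt (T.u k a - T.u k i)) ∧
  (∀ k i a, 1 ≤ i → i ≤ k → 1 ≤ a → a ≤ k → k ≤ n - 1 → ¬IsInt (T.u k a + T.u k i)) ∧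
  (∀ k i, 1 ≤ i → i ≤ k → k ≤ n - 1 → ¬IsHalfInt (T.u k i))

/-- Normalization of a type-`C` tableau: all entries outside `1 ≤ i ≤ k ≤ n` vanish. -/
def CNorm (n : ℕ) (T : Tab ℂ) : Prop :=
  (∀ k i, ¬(1 ≤ i ∧ i ≤ k ∧ k ≤ n) → T.u k i = 0) ∧
  (∀ k i, ¬(1 ≤ i ∧ i ≤ k ∧ k ≤ n) → T.p k i = 0)

/-- Normalization of a type-`D` tableau: unprimed entries outside `1 ≤ i ≤ k ≤ n` and primed
entries outside `2 ≤ i ≤ k ≤ n` vanish. -/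
def DNorm (n : ℕ) (T : Tab ℂ) : Prop :=
  (∀ k i, ¬(1 ≤ i ∧ i ≤ k ∧ k ≤ n) → T.u k i = 0) ∧
  (∀ k i, ¬(2 ≤ i ∧ i ≤ k ∧ k ≤ n) → T.p k i = 0)

/-- A dominant `so(2n)`-weight. -/
def SODominant {n : ℕ} (lam : Fin n → ℂ) : Prop :=
  (∀ i j : Fin n, (i : ℕ) + 1 = (j : ℕ) → IntGE (lam i) (lam j)) ∧
  (∀ i j : Fin n, (i : ℕ) = 0 → (j : ℕ) = 1 → IntGE (-(lam i + lam j)) 0)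

/-- `D_st^λ`: the set of (normalized) `D`-standard tableaux with top row
`ℓ_i = λ_i - i + 3/2` (`1`-based `i`). -/
def DSt (n : ℕ) (lam : Fin n → ℂ) : Set (Tab ℂ) :=
  {T | DNorm n T ∧ IsDStandard n T ∧
    ∀ i : Fin n, T.u n ((i : ℕ) + 1) = lam i - ((i : ℕ) + 1) + 3 / 2}

/-- The type-`D` tableau obtained from a type-`C` tableau by deleting the entries
`ℓ'_{11}, …, ℓ'_{n1}`. -/
def CtoD (W : Tab ℂ) : Tab ℂ := ⟨W.u, fun k i => if i = 1 then 0 else W.p k i⟩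

/-- `𝔅(μ,λ)`: type-`C` tableaux whose left-most primed column is in `μ + ℤ^n` and whose
remaining part is a `D`-standard tableau with top row `λ + ρ_D + 1/2`. -/
def TabB (n : ℕ) (mu lam : Fin n → ℂ) : Set (Tab ℂ) :=
  {W | CNorm n W ∧ (∀ k : Fin n, IsInt (W.p ((k : ℕ) + 1) 1 - mu k)) ∧ CtoD W ∈ DSt n lam}

/-- Membership of a vector of `ℂ^n` in the root lattice `Q_C = {a ∈ ℤ^n | ∑ a_i ∈ 2ℤ}`. -/
def QCvec {n : ℕ} (v : Fin n → ℂ) : Prop :=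
  ∃ q : Fin n → ℤ, (2 ∣ ∑ i, q i) ∧ ∀ i, v i = (q i : ℂ)

/-! ### The symplectic Lie algebra `sp(2n, ℂ)` -/

/-- Index set `{1,…,n} × {±}` for rows/columns of `2n × 2n` matrices: `(k, true)` is the
positive index `k`, `(k, false)` is the negative index `-k`. -/
abbrev SpIdx (n : ℕ) := Fin n × Bool

/-- The sign of an index. -/
def sgnC {n : ℕ} (a : SpIdx n) : ℂ := if a.2 then 1 else -1

/-- `a ↦ -a` on indices. -/
def negIdx {n : ℕ} (a : SpIdx n) : SpIdx n := (a.1, !a.2)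

attribute [local instance] LieRing.ofAssociativeRing
attribute [local instance] LieAlgebra.ofAssociativeAlgebra

/-- `F_{ab} = E_{ab} - sgn(a)sgn(b) E_{-b,-a}`. -/
def Fmat (n : ℕ) (a b : SpIdx n) : Matrix (SpIdx n) (SpIdx n) ℂ :=
  Matrix.single a b 1 - Matrix.single (negIdx b) (negIdx a) (sgnC a * sgnC b)

/-- `sp(2n, ℂ)`: the Lie subalgebra of `gl(2n, ℂ)` spanned by the `F_{ab}`. -/
def sp (n : ℕ) : LieSubalgebra ℂ (Matrix (SpIdx n) (SpIdx n) ℂ) :=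
  LieSubalgebra.lieSpan ℂ _ (Set.range fun x : SpIdx n × SpIdx n => Fmat n x.1 x.2)

/-- `F_{ab}` as an element of `sp(2n, ℂ)`. -/
def spF (n : ℕ) (a b : SpIdx n) : sp n :=
  ⟨Fmat n a b, LieSubalgebra.subset_lieSpan ⟨(a, b), rfl⟩⟩

/-- The basis vector of the free module on a set `S` of tableaux attached to `L`, with the
convention that `T(L) = 0` whenever `L ∉ S`. -/
def bvec {F : Type*} [Field F] (S : Set (Tab F)) (L : Tab F) : ↥S →₀ F :=
  if h : L ∈ S then Finsupp.single ⟨L, h⟩ 1 else 0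

/-- The statement that a Lie algebra homomorphism `ρ : sp(2n,ℂ) → End(V)` acts on the basis `S`
of tableaux by the Gelfand--Tsetlin formulas (with 1-based row index `k+1` for `k : Fin n`). -/
def GTact (n : ℕ) {F : Type*} [Field F] [Algebra ℂ F] (S : Set (Tab F))
    (ρ : sp n →ₗ⁅ℂ⁆ Module.End ℂ (↥S →₀ F)) : Prop :=
  ∀ L ∈ S,
    (∀ k : Fin n,
      ρ (spF n (k, true) (k, true)) (bvec S L) = wt ((k : ℕ) + 1) L • bvec S L ∧
      ρ (spF n (k, true) (k, false)) (bvec S L) =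
        ∑ i ∈ Finset.Icc 1 ((k : ℕ) + 1),
          coA ((k : ℕ) + 1) i L • bvec S (L.addZ (deltaP ((k : ℕ) + 1) i)) ∧
      ρ (spF n (k, false) (k, true)) (bvec S L) =
        ∑ i ∈ Finset.Icc 1 ((k : ℕ) + 1),
          coB ((k : ℕ) + 1) i L • bvec S (L.addZ (-deltaP ((k : ℕ) + 1) i))) ∧
    (∀ k : Fin n, 1 ≤ (k : ℕ) →
      ρ (spF n (⟨(k : ℕ) - 1, lt_of_le_of_lt (Nat.sub_le _ _) k.isLt⟩, true) (k, false))
          (bvec S L) =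
        (∑ i ∈ Finset.Icc 1 (k : ℕ),
          coC ((k : ℕ) + 1) i L • bvec S (L.addZ (-deltaU (k : ℕ) i))) +
        ∑ i ∈ Finset.Icc 1 ((k : ℕ) + 1), ∑ j ∈ Finset.Icc 1 (k : ℕ), ∑ m ∈ Finset.Icc 1 (k : ℕ),
          coD ((k : ℕ) + 1) i j m L •
            bvec S (L.addZ (deltaP ((k : ℕ) + 1) i + deltaU (k : ℕ) j + deltaP (k : ℕ) m)))

/-- The set of tableaux `{T(L + Z)}` with `Z` an integer tableau vanishing on the unprimed
top row. -/
def orbitB {F : Type*} [Field F] (n : ℕ) (L : Tab F) : Set (Tab F) :=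
  {M | ∃ Z : Tab ℤ, (∀ i, Z.u n i = 0) ∧ M = L.addZ Z}

/-- The tableau `T(W^{μ,λ})`. -/
def Wup (n : ℕ) (mu lam : Fin n → ℂ) : Tab ℂ :=
  ⟨fun k i => if h : 1 ≤ i ∧ i ≤ k ∧ k ≤ n then lam ⟨i - 1, by omega⟩ - (i : ℂ) + 3 / 2 else 0,
   fun k i => if h : 1 ≤ i ∧ i ≤ k ∧ k ≤ n then
      (if i = 1 then mu ⟨k - 1, by omega⟩ else lam ⟨i - 1, by omega⟩ - (i : ℂ) + 3 / 2) else 0⟩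

/-- The tableau `T(W_{μ,λ})`. -/
def Wlow (n : ℕ) (mu lam : Fin n → ℂ) : Tab ℂ :=
  ⟨fun k i => if h : 1 ≤ i ∧ i ≤ k ∧ k ≤ n then
      (if i = 1 then
        (if (n - k) % 2 = 0 then lam ⟨0, by omega⟩ + 1 / 2 else 1 - (lam ⟨0, by omega⟩ + 1 / 2))
       else lam ⟨i - 1, by omega⟩ - (i : ℂ) + 3 / 2) else 0,
   fun k i => if h : 1 ≤ i ∧ i ≤ k ∧ k ≤ n then
      (if i = 1 then mu ⟨k - 1, by omega⟩ else lam ⟨i - 1, by omega⟩ - (i : ℂ) + 3 / 2) else 0⟩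

/-- `𝔅_k^+(μ,λ)` for a `1`-based row index `k`. -/
def BkPlus (n : ℕ) (mu lam : Fin n → ℂ) (k : ℕ) : Set (Tab ℂ) :=
  {W | W ∈ TabB n mu lam ∧ IntGE (W.p k 1) (1 / 2)}

end GTpaper

namespace GTpaper

/-! ### Auxiliary machinery for Statement 11 -/

/-- Extract the integer value of a complex number (junk value `0` otherwise). -/
def zv (x : ℂ) : ℤ := if h : ∃ z : ℤ, x = (z : ℂ) then h.choose else 0

lemma zv_eq {x : ℂ} {z : ℤ} (h : x = (z : ℂ)) : zv x = z := by
  have hx : ∃ z : ℤ, x = (z : ℂ) := ⟨z, h⟩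
  rw [zv, dif_pos hx]
  have h2 := hx.choose_spec
  exact_mod_cast h2.symm.trans h

lemma zv_cast {x : ℂ} (h : ∃ z : ℤ, x = (z : ℂ)) : ((zv x : ℤ) : ℂ) = x := by
  obtain ⟨z, hz⟩ := h; rw [zv_eq hz, hz]

lemma zv_zero : zv 0 = 0 := zv_eq (by norm_num)

lemma zv_one_sub {x : ℂ} (h : ∃ z : ℤ, x = (z : ℂ)) : zv (1 - x) = 1 - zv x := by
  obtain ⟨z, hz⟩ := h
  rw [zv_eq hz, zv_eq (z := 1 - z) (by rw [hz]; push_cast; ring)]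

/-- Telescoping lemma. -/
lemma tele (f : ℕ → ℤ) (h0 : f 0 = 0) :
    ∀ N, ∑ k ∈ Finset.Icc 1 N, (f k + f (k - 1)) =
      f N + 2 * ∑ k ∈ Finset.Icc 1 (N - 1), f k := by
  intro N
  induction N with
  | zero => simp [h0]
  | succ N ih =>
    rw [Finset.sum_Icc_succ_top (by omega)]
    rcases Nat.eq_zero_or_pos N with hN | hN
    · subst hN; simp [h0]
    · obtain ⟨M, rfl⟩ : ∃ M, N = M + 1 := ⟨N - 1, by omega⟩
      rw [ih, show M + 1 + 1 - 1 = M + 1 from rfl,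
        Finset.sum_Icc_succ_top (a := 1) (b := M) (by omega)]
      simp only [Nat.add_sub_cancel]
      ring

/-- Flipping `u ↦ 1 - u` preserves the two-sided condition `-p ≥ u > p`. -/
lemma flip_pair {p u : ℂ} (h1 : IntGE (-p) u) (h2 : IntGT u p) :
    IntGE (-p) (1 - u) ∧ IntGT (1 - u) p := by
  obtain ⟨m, hm⟩ := h1
  obtain ⟨m', hm'⟩ := h2
  exact ⟨⟨m', by linear_combination hm'⟩, ⟨m, by linear_combination hm⟩⟩

/-- All-integer-entry predicate for tableaux. -/
def IntEnt (T : Tab ℂ) : Prop :=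
  ∀ k i, (∃ z : ℤ, T.u k i = (z : ℂ)) ∧ (∃ z : ℤ, T.p k i = (z : ℂ))

/-- Row sums of integer values. -/
def AU (T : Tab ℂ) (k : ℕ) : ℤ := ∑ i ∈ Finset.Icc 1 k, zv (T.u k i)

def AP (T : Tab ℂ) (k : ℕ) : ℤ := ∑ i ∈ Finset.Icc 1 k, zv (T.p k i)

/-- Integer version of the weight `wt`. -/
def ZW (T : Tab ℂ) (k : ℕ) : ℤ := 2 * AP T k - AU T k - AU T (k - 1)

lemma wt_sub_eq {T T' : Tab ℂ} (hT : IntEnt T) (hT' : IntEnt T') (k : ℕ) :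
    wt k T - wt k T' = ((ZW T k - ZW T' k : ℤ) : ℂ) := by
  have hs : ∀ (S : Tab ℂ), IntEnt S → ∀ a b,
      ∑ i ∈ Finset.Icc a b, S.p b i = ((∑ i ∈ Finset.Icc a b, zv (S.p b i) : ℤ) : ℂ) := by
    intro S hS a b
    push_cast
    exact Finset.sum_congr rfl fun i _ => (zv_cast (hS b i).2).symm
  have hsu : ∀ (S : Tab ℂ), IntEnt S → ∀ a b c,
      ∑ i ∈ Finset.Icc a b, S.u c i = ((∑ i ∈ Finset.Icc a b, zv (S.u c i) : ℤ) : ℂ) := by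
    intro S hS a b c
    push_cast
    exact Finset.sum_congr rfl fun i _ => (zv_cast (hS c i).1).symm
  rw [wt, wt, hs T hT, hs T' hT', hsu T hT 1 (k-1) (k-1), hsu T' hT' 1 (k-1) (k-1),
    hsu T hT 1 k k, hsu T' hT' 1 k k]
  rw [ZW, ZW, AU, AU, AU, AU, AP, AP]
  push_cast
  ring

/-- All entries of a `D`-standard tableau with fixed half-integer top row are integers of
bounded absolute value. -/
lemma DSt_bound (n : ℕ) (lam : Fin n → ℂ) (hlam : ∀ i, IsHalfInt (lam i)) :
    ∃ M : ℕ, ∀ T ∈ DSt n lam, ∀ k i,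
      (∃ z : ℤ, T.u k i = (z : ℂ) ∧ z.natAbs ≤ M) ∧
      (∃ z : ℤ, T.p k i = (z : ℂ) ∧ z.natAbs ≤ M) := by
  choose m hm using hlam
  set t : Fin n → ℤ := fun j => m j - (j : ℤ) + 1 with ht
  refine ⟨Finset.univ.sup (fun j => (t j).natAbs), ?_⟩
  set M := Finset.univ.sup (fun j => (t j).natAbs) with hM
  intro T hT
  obtain ⟨hnorm, hstd, htop⟩ := hT
  -- top row
  have htopv : ∀ i, 1 ≤ i → i ≤ n → ∃ z : ℤ, T.u n i = (z : ℂ) ∧ z.natAbs ≤ M := by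
    intro i h1 h2
    set j : Fin n := ⟨i - 1, by omega⟩ with hj
    have he := htop j
    have hi : (j : ℕ) + 1 = i := by simp [hj]; omega
    rw [hi] at he
    refine ⟨t j, ?_, Finset.le_sup (f := fun j => (t j).natAbs) (Finset.mem_univ j)⟩
    rw [he, hm j, ht]
    push_cast
    ring
  -- step: bounds on row k imply bounds on primed row k and row k-1
  have hQstep : ∀ k, 2 ≤ k → k ≤ n →
      (∀ i, 1 ≤ i → i ≤ k → ∃ z : ℤ, T.u k i = (z : ℂ) ∧ z.natAbs ≤ M) →
      ((∀ i, 2 ≤ i → i ≤ k → ∃ z : ℤ, T.p k i = (z : ℂ) ∧ z.natAbs ≤ M) ∧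
       (∀ i, 1 ≤ i → i ≤ k - 1 → ∃ z : ℤ, T.u (k - 1) i = (z : ℂ) ∧ z.natAbs ≤ M)) := by
    intro k hk2 hkn hQ
    obtain ⟨c1, c2, c3, c4, c5, c6⟩ := hstd k hk2 hkn
    have hp : ∀ i, 2 ≤ i → i ≤ k → ∃ z : ℤ, T.p k i = (z : ℂ) ∧ z.natAbs ≤ M := by
      intro i h2 hik
      obtain ⟨z, hz, hzM⟩ := hQ i (by omega) hik
      obtain ⟨z', hz', hz'M⟩ := hQ (i - 1) (by omega) (by omega)
      obtain ⟨a, ha⟩ := c2 i h2 hik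
      obtain ⟨b, hb⟩ := c3 (i - 1) (by omega) (by omega)
      rw [show i - 1 + 1 = i by omega] at hb
      refine ⟨z + a, by rw [ha, hz]; push_cast; ring, ?_⟩
      have hzz : z' = z + a + b + 1 := by
        have : (z' : ℂ) = ((z + a + b + 1 : ℤ) : ℂ) := by
          rw [← hz', hb, ha, hz]; push_cast; ring
        exact_mod_cast this
      omega
    refine ⟨hp, ?_⟩
    intro i h1 hik
    rcases eq_or_lt_of_le h1 with h1' | h1'
    · -- i = 1
      subst h1'
      obtain ⟨zp, hzp, hzpM⟩ := hp 2 le_rfl hk2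
      obtain ⟨a, ha⟩ := c4
      obtain ⟨b, hb⟩ := c6 1 le_rfl hik
      rw [show (1 : ℕ) + 1 = 2 from rfl] at hb
      refine ⟨zp + b + 1, by rw [hb, hzp]; push_cast; ring, ?_⟩
      rw [hzp, hb, hzp] at ha
      have : -zp = zp + (b : ℤ) + 1 + a := by exact_mod_cast ha
      omega
    · -- 2 ≤ i
      obtain ⟨zp, hzp, hzpM⟩ := hp i h1' (by omega)
      obtain ⟨zp', hzp', hzp'M⟩ := hp (i + 1) (by omega) (by omega)
      obtain ⟨a, ha⟩ := c5 i h1' hik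
      obtain ⟨b, hb⟩ := c6 i h1 hik
      rw [hzp] at ha
      refine ⟨zp - a, by push_cast; linear_combination -ha, ?_⟩
      rw [hzp'] at hb
      have hub : T.u (k - 1) i = ((zp - a : ℤ) : ℂ) := by push_cast; linear_combination -ha
      rw [hub] at hb
      have : zp - a = zp' + (b : ℤ) + 1 := by exact_mod_cast hb
      omega
  -- downward induction on rows
  have hrow : ∀ d, ∀ i, 1 ≤ i → i ≤ n - d →
      ∃ z : ℤ, T.u (n - d) i = (z : ℂ) ∧ z.natAbs ≤ M := by
    intro d
    induction d with
    | zero => simpa using htopv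
    | succ d ih =>
      intro i h1 h2
      have hnd : 2 ≤ n - d := by omega
      have := (hQstep (n - d) hnd (by omega) ih).2
      rw [show n - (d + 1) = n - d - 1 by omega]
      exact this i h1 (by omega)
  have hrow' : ∀ k, 1 ≤ k → k ≤ n → ∀ i, 1 ≤ i → i ≤ k →
      ∃ z : ℤ, T.u k i = (z : ℂ) ∧ z.natAbs ≤ M := by
    intro k hk1 hkn i h1 h2
    have := hrow (n - k) i h1 (by omega)
    rwa [show n - (n - k) = k by omega] at this
  intro k i
  constructor
  · by_cases h : 1 ≤ i ∧ i ≤ k ∧ k ≤ n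
    · exact hrow' k (by omega) h.2.2 i h.1 h.2.1
    · exact ⟨0, by rw [hnorm.1 k i h]; norm_num, by simp⟩
  · by_cases h : 2 ≤ i ∧ i ≤ k ∧ k ≤ n
    · exact (hQstep k (by omega) h.2.2 (hrow' k (by omega) h.2.2)).1 i h.1 h.2.1
    · exact ⟨0, by rw [hnorm.2 k i h]; norm_num, by simp⟩

lemma DSt_intEnt {n : ℕ} {lam : Fin n → ℂ} (hlam : ∀ i, IsHalfInt (lam i))
    {T : Tab ℂ} (hT : T ∈ DSt n lam) : IntEnt T := by
  obtain ⟨M, hMa⟩ := DSt_bound n lam hlam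
  intro k i
  obtain ⟨⟨z, hz, -⟩, ⟨z', hz', -⟩⟩ := hMa T hT k i
  exact ⟨⟨z, hz⟩, ⟨z', hz'⟩⟩

lemma Tab.ext' {T T' : Tab ℂ} (h1 : ∀ k i, T.u k i = T'.u k i)
    (h2 : ∀ k i, T.p k i = T'.p k i) : T = T' := by
  cases T; cases T'
  simp only [Tab.mk.injEq]
  exact ⟨funext fun k => funext (h1 k), funext fun k => funext (h2 k)⟩

lemma DSt_finite (n : ℕ) (lam : Fin n → ℂ) (hlam : ∀ i, IsHalfInt (lam i)) :
    (DSt n lam).Finite := by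
  obtain ⟨M, hM⟩ := DSt_bound n lam hlam
  set S : Finset ℂ := (Finset.Icc (-(M : ℤ)) (M : ℤ)).image (fun z : ℤ => (z : ℂ)) with hS
  set F : Tab ℂ → (Fin (n + 1) → Fin (n + 1) → ℂ × ℂ) :=
    fun T k i => (T.u k i, T.p k i) with hF
  have hmemS : ∀ (x : ℂ), (∃ z : ℤ, x = (z : ℂ) ∧ z.natAbs ≤ M) → x ∈ S := by
    rintro x ⟨z, hz, hzM⟩
    rw [hS, Finset.mem_image]
    exact ⟨z, by rw [Finset.mem_Icc]; constructor <;> omega, hz.symm⟩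
  apply Set.Finite.of_finite_image (f := F)
  · apply Set.Finite.subset (Set.Finite.pi fun _ : Fin (n + 1) =>
      Set.Finite.pi fun _ : Fin (n + 1) =>
        (S.finite_toSet.prod S.finite_toSet))
    rintro _ ⟨T, hT, rfl⟩
    intro k _
    intro i _
    obtain ⟨hu, hp⟩ := hM T hT k i
    exact ⟨hmemS _ hu, hmemS _ hp⟩
  · intro T hT T' hT' hFT
    have hu : ∀ k i, T.u k i = T'.u k i := by
      intro k i
      by_cases h : k ≤ n ∧ i ≤ n
      · have := congrFun (congrFun hFT ⟨k, by omega⟩) ⟨i, by omega⟩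
        exact (Prod.ext_iff.1 this).1
      · rw [hT.1.1 k i (by omega), hT'.1.1 k i (by omega)]
    have hp : ∀ k i, T.p k i = T'.p k i := by
      intro k i
      by_cases h : k ≤ n ∧ i ≤ n
      · have := congrFun (congrFun hFT ⟨k, by omega⟩) ⟨i, by omega⟩
        exact (Prod.ext_iff.1 this).2
      · rw [hT.1.2 k i (by omega), hT'.1.2 k i (by omega)]
    exact Tab.ext' hu hp

lemma top_row_eq {n : ℕ} {lam : Fin n → ℂ} {T T' : Tab ℂ}
    (hT : T ∈ DSt n lam) (hT' : T' ∈ DSt n lam) : ∀ i, T.u n i = T'.u n i := by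
  intro i
  by_cases h : 1 ≤ i ∧ i ≤ n
  · set j : Fin n := ⟨i - 1, by omega⟩ with hj
    have he := hT.2.2 j
    have he' := hT'.2.2 j
    have hi : (j : ℕ) + 1 = i := by simp [hj]; omega
    rw [hi] at he he'
    rw [he, he']
  · rw [hT.1.1 n i (by omega), hT'.1.1 n i (by omega)]

lemma AU_zero_of_high {n : ℕ} {lam : Fin n → ℂ} {T : Tab ℂ}
    (hT : T ∈ DSt n lam) {j : ℕ} (hj : n < j) : AU T j = 0 := by
  apply Finset.sum_eq_zero
  intro i _
  rw [hT.1.1 j i (by omega), zv_zero]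

lemma AP_zero_of_high {n : ℕ} {lam : Fin n → ℂ} {T : Tab ℂ}
    (hT : T ∈ DSt n lam) {j : ℕ} (hj : n < j) : AP T j = 0 := by
  apply Finset.sum_eq_zero
  intro i _
  rw [hT.1.2 j i (by omega), zv_zero]

lemma AU_top_eq {n : ℕ} {lam : Fin n → ℂ} {T T' : Tab ℂ}
    (hT : T ∈ DSt n lam) (hT' : T' ∈ DSt n lam) : AU T n = AU T' n :=
  Finset.sum_congr rfl fun i _ => by rw [top_row_eq hT hT' i]

lemma ZW_out {n : ℕ} {lam : Fin n → ℂ} {T T' : Tab ℂ}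
    (hT : T ∈ DSt n lam) (hT' : T' ∈ DSt n lam) (k : ℕ) (hk : k = 0 ∨ n < k) :
    ZW T k = ZW T' k := by
  rcases hk with rfl | hk
  · simp [ZW, AU, AP]
  · rw [ZW, ZW, AP_zero_of_high hT hk, AP_zero_of_high hT' hk,
      AU_zero_of_high hT hk, AU_zero_of_high hT' hk]
    rcases eq_or_lt_of_le (by omega : n ≤ k - 1) with h | h
    · rw [← h, AU_top_eq hT hT']
    · rw [AU_zero_of_high hT h, AU_zero_of_high hT' h]

lemma ZW_sum_eq {n : ℕ} {lam : Fin n → ℂ} {T : Tab ℂ} (hT : T ∈ DSt n lam) :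
    ∑ k ∈ Finset.Icc 1 n, ZW T k =
      2 * (∑ k ∈ Finset.Icc 1 n, AP T k) -
        (AU T n + 2 * ∑ k ∈ Finset.Icc 1 (n - 1), AU T k) := by
  have e1 : ∑ k ∈ Finset.Icc 1 n, (AU T k + AU T (k - 1)) =
      AU T n + 2 * ∑ k ∈ Finset.Icc 1 (n - 1), AU T k :=
    tele (AU T) (by simp [AU]) n
  have e2 : ∑ k ∈ Finset.Icc 1 n, ZW T k =
      ∑ k ∈ Finset.Icc 1 n, (2 * AP T k) - ∑ k ∈ Finset.Icc 1 n, (AU T k + AU T (k - 1)) := by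
    rw [← Finset.sum_sub_distrib]
    exact Finset.sum_congr rfl fun k _ => by rw [ZW]; ring
  rw [e2, e1, ← Finset.mul_sum]

lemma ZW_total {n : ℕ} {lam : Fin n → ℂ} {T T' : Tab ℂ}
    (hT : T ∈ DSt n lam) (hT' : T' ∈ DSt n lam) :
    2 ∣ ∑ k ∈ Finset.Icc 1 n, (ZW T k - ZW T' k) := by
  rw [Finset.sum_sub_distrib, ZW_sum_eq hT, ZW_sum_eq hT', AU_top_eq hT hT']
  exact ⟨(∑ k ∈ Finset.Icc 1 n, AP T k) - (∑ k ∈ Finset.Icc 1 (n-1), AU T k)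
    - (∑ k ∈ Finset.Icc 1 n, AP T' k) + (∑ k ∈ Finset.Icc 1 (n-1), AU T' k), by ring⟩

lemma wt_CtoD (W : Tab ℂ) (k : ℕ) (hk : 1 ≤ k) :
    wt k W = 2 * W.p k 1 + wt k (CtoD W) := by
  have h1 : (1 : ℕ) ∈ Finset.Icc 1 k := Finset.mem_Icc.2 ⟨le_rfl, hk⟩
  have hps : ∑ i ∈ Finset.Icc 1 k, (CtoD W).p k i =
      (∑ i ∈ Finset.Icc 1 k, W.p k i) - W.p k 1 := by
    rw [← Finset.add_sum_erase _ _ h1, ← Finset.add_sum_erase _ (fun i => W.p k i) h1]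
    have : ∀ i ∈ (Finset.Icc 1 k).erase 1, (CtoD W).p k i = W.p k i := by
      intro i hi
      have : i ≠ 1 := Finset.ne_of_mem_erase hi
      simp [CtoD, this]
    rw [Finset.sum_congr rfl this]
    simp [CtoD]
  have hus : ∀ m, ∑ i ∈ Finset.Icc 1 m, (CtoD W).u m i = ∑ i ∈ Finset.Icc 1 m, W.u m i :=
    fun m => rfl
  rw [wt, wt, hps, hus, hus]
  ring

/-- Flip the entries `u_{k1}`, `1 ≤ k ≤ n-1`, selected by `b`, to `1 - u_{k1}`. -/
def flipT (n : ℕ) (b : ℕ → Bool) (T : Tab ℂ) : Tab ℂ :=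
  ⟨fun k i => if i = 1 ∧ 1 ≤ k ∧ k ≤ n - 1 ∧ b k = true then 1 - T.u k 1 else T.u k i, T.p⟩

/-- The change of the integer row sum under a flip. -/
def dlt (n : ℕ) (b : ℕ → Bool) (T : Tab ℂ) (j : ℕ) : ℤ :=
  if 1 ≤ j ∧ j ≤ n - 1 ∧ b j = true then 1 - 2 * zv (T.u j 1) else 0

/-- Relative integer weight partial sums. -/
def PS (T0 T : Tab ℂ) (j : ℕ) : ℤ := ∑ k ∈ Finset.Icc 1 j, (ZW T k - ZW T0 k)

lemma PS_step (T0 T : Tab ℂ) (k : ℕ) (hk : 1 ≤ k) :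
    PS T0 T k = PS T0 T (k - 1) + (ZW T k - ZW T0 k) := by
  obtain ⟨m, rfl⟩ : ∃ m, k = m + 1 := ⟨k - 1, by omega⟩
  rw [PS, PS, Finset.sum_Icc_succ_top (by omega)]
  simp

lemma flipT_u_ne (n : ℕ) (b : ℕ → Bool) (T : Tab ℂ) {k i : ℕ} (hi : i ≠ 1) :
    (flipT n b T).u k i = T.u k i := by
  rw [flipT]
  exact if_neg (by tauto)

lemma flipT_u_one (n : ℕ) (b : ℕ → Bool) (T : Tab ℂ) (k : ℕ)
    (h : 1 ≤ k ∧ k ≤ n - 1 ∧ b k = true) : (flipT n b T).u k 1 = 1 - T.u k 1 := by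
  rw [flipT]
  exact if_pos ⟨rfl, h⟩

lemma flipT_u_one' (n : ℕ) (b : ℕ → Bool) (T : Tab ℂ) (k : ℕ)
    (h : ¬(1 ≤ k ∧ k ≤ n - 1 ∧ b k = true)) : (flipT n b T).u k 1 = T.u k 1 := by
  rw [flipT]
  exact if_neg (by tauto)

lemma flipT_flipT (n : ℕ) (b : ℕ → Bool) (T : Tab ℂ) :
    flipT n b (flipT n b T) = T := by
  refine Tab.ext' ?_ (fun k i => rfl)
  intro k i
  by_cases h : i = 1 ∧ 1 ≤ k ∧ k ≤ n - 1 ∧ b k = true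
  · rw [show (flipT n b (flipT n b T)).u k i = if i = 1 ∧ 1 ≤ k ∧ k ≤ n - 1 ∧ b k = true
        then 1 - (flipT n b T).u k 1 else (flipT n b T).u k i from rfl,
      if_pos h, flipT_u_one n b T k h.2, h.1]
    ring
  · rw [show (flipT n b (flipT n b T)).u k i = if i = 1 ∧ 1 ≤ k ∧ k ≤ n - 1 ∧ b k = true
        then 1 - (flipT n b T).u k 1 else (flipT n b T).u k i from rfl,
      if_neg h, show (flipT n b T).u k i = if i = 1 ∧ 1 ≤ k ∧ k ≤ n - 1 ∧ b k = true
        then 1 - T.u k 1 else T.u k i from rfl, if_neg h]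

lemma flipT_congr (n : ℕ) {b b' : ℕ → Bool} (T : Tab ℂ)
    (h : ∀ j, 1 ≤ j → j ≤ n - 1 → b j = b' j) : flipT n b T = flipT n b' T := by
  refine Tab.ext' ?_ (fun k i => rfl)
  intro k i
  show (if i = 1 ∧ 1 ≤ k ∧ k ≤ n - 1 ∧ b k = true then 1 - T.u k 1 else T.u k i) =
    (if i = 1 ∧ 1 ≤ k ∧ k ≤ n - 1 ∧ b' k = true then 1 - T.u k 1 else T.u k i)
  by_cases hg : i = 1 ∧ 1 ≤ k ∧ k ≤ n - 1 ∧ b k = true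
  · rw [if_pos hg, if_pos ⟨hg.1, hg.2.1, hg.2.2.1, by rw [← h k hg.2.1 hg.2.2.1]; exact hg.2.2.2⟩]
  · rw [if_neg hg, if_neg (by rintro ⟨h1, h2, h3, h4⟩; exact hg ⟨h1, h2, h3, by rw [h k h2 h3]; exact h4⟩)]

lemma flipT_mem {n : ℕ} {lam : Fin n → ℂ} (hn : 1 ≤ n) (b : ℕ → Bool) {T : Tab ℂ}
    (hT : T ∈ DSt n lam) : flipT n b T ∈ DSt n lam := by
  obtain ⟨hnorm, hstd, htop⟩ := hT
  refine ⟨⟨?_, hnorm.2⟩, ?_, ?_⟩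
  · intro k i hki
    rw [show (flipT n b T).u k i = if i = 1 ∧ 1 ≤ k ∧ k ≤ n - 1 ∧ b k = true
        then 1 - T.u k 1 else T.u k i from rfl, if_neg ?_]
    · exact hnorm.1 k i hki
    · rintro ⟨rfl, h1, h2, -⟩
      exact hki ⟨le_rfl, h1, by omega⟩
  · intro k hk2 hkn
    obtain ⟨c1, c2, c3, c4, c5, c6⟩ := hstd k hk2 hkn
    have hpeq : ∀ a i, (flipT n b T).p a i = T.p a i := fun a i => rfl
    refine ⟨?_, ?_, ?_, ?_, ?_, ?_⟩
    · rw [hpeq]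
      by_cases h : 1 ≤ k ∧ k ≤ n - 1 ∧ b k = true
      · rw [flipT_u_one n b T k h]
        exact (flip_pair c1 (c3 1 le_rfl hk2)).1
      · rw [flipT_u_one' n b T k h]; exact c1
    · intro i h2 hik
      rw [hpeq, flipT_u_ne n b T (by omega)]
      exact c2 i h2 hik
    · intro i h1 hik
      rw [hpeq]
      by_cases hi : i = 1
      · subst hi
        by_cases h : 1 ≤ k ∧ k ≤ n - 1 ∧ b k = true
        · rw [flipT_u_one n b T k h]
          exact (flip_pair c1 (c3 1 le_rfl hk2)).2
        · rw [flipT_u_one' n b T k h]; exact c3 1 h1 hik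
      · rw [flipT_u_ne n b T hi]; exact c3 i h1 hik
    · rw [hpeq]
      by_cases h : 1 ≤ k - 1 ∧ k - 1 ≤ n - 1 ∧ b (k - 1) = true
      · rw [flipT_u_one n b T (k - 1) h]
        exact (flip_pair c4 (c6 1 le_rfl h.1)).1
      · rw [flipT_u_one' n b T (k - 1) h]; exact c4
    · intro i h2 hik
      rw [hpeq, flipT_u_ne n b T (by omega)]
      exact c5 i h2 hik
    · intro i h1 hik
      rw [hpeq]
      by_cases hi : i = 1
      · subst hi
        by_cases h : 1 ≤ k - 1 ∧ k - 1 ≤ n - 1 ∧ b (k - 1) = true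
        · rw [flipT_u_one n b T (k - 1) h]
          exact (flip_pair c4 (c6 1 le_rfl h.1)).2
        · rw [flipT_u_one' n b T (k - 1) h]; exact c6 1 h1 hik
      · rw [flipT_u_ne n b T hi]; exact c6 i h1 hik
  · intro i
    rw [show (flipT n b T).u n ((i : ℕ) + 1) =
        if (i : ℕ) + 1 = 1 ∧ 1 ≤ n ∧ n ≤ n - 1 ∧ b n = true
        then 1 - T.u n 1 else T.u n ((i : ℕ) + 1) from rfl,
      if_neg (by rintro ⟨-, -, h, -⟩; omega)]
    exact htop i

lemma AU_flip {n : ℕ} (b : ℕ → Bool) {T : Tab ℂ} (hInt : IntEnt T) (k : ℕ) :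
    AU (flipT n b T) k = AU T k + dlt n b T k := by
  by_cases h : 1 ≤ k ∧ k ≤ n - 1 ∧ b k = true
  · have h1 : (1 : ℕ) ∈ Finset.Icc 1 k := Finset.mem_Icc.2 ⟨le_rfl, h.1⟩
    rw [AU, AU, dlt, if_pos h, ← Finset.add_sum_erase _ _ h1,
      ← Finset.add_sum_erase _ (fun i => zv (T.u k i)) h1]
    have he : ∀ i ∈ (Finset.Icc 1 k).erase 1,
        zv ((flipT n b T).u k i) = zv (T.u k i) := by
      intro i hi
      rw [flipT_u_ne n b T (Finset.ne_of_mem_erase hi)]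
    rw [Finset.sum_congr rfl he, flipT_u_one n b T k h, zv_one_sub (hInt k 1).1]
    ring
  · rw [AU, AU, dlt, if_neg h, add_zero]
    refine Finset.sum_congr rfl fun i _ => ?_
    rw [show (flipT n b T).u k i = if i = 1 ∧ 1 ≤ k ∧ k ≤ n - 1 ∧ b k = true
        then 1 - T.u k 1 else T.u k i from rfl, if_neg (by tauto)]

lemma ZW_flip {n : ℕ} (b : ℕ → Bool) {T : Tab ℂ} (hInt : IntEnt T) (k : ℕ) :
    ZW (flipT n b T) k = ZW T k - dlt n b T k - dlt n b T (k - 1) := by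
  have hAP : AP (flipT n b T) k = AP T k := rfl
  rw [ZW, ZW, hAP, AU_flip b hInt, AU_flip b hInt]
  ring

lemma dlt_zero (n : ℕ) (b : ℕ → Bool) (T : Tab ℂ) : dlt n b T 0 = 0 :=
  if_neg (by omega)

lemma dlt_mod (n : ℕ) (b : ℕ → Bool) (T : Tab ℂ) (j : ℕ) :
    dlt n b T j % 2 = if 1 ≤ j ∧ j ≤ n - 1 ∧ b j = true then 1 else 0 := by
  by_cases h : 1 ≤ j ∧ j ≤ n - 1 ∧ b j = true
  · rw [dlt, if_pos h, if_pos h]; omega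
  · rw [dlt, if_neg h, if_neg h]; rfl

lemma PS_flip {n : ℕ} (b : ℕ → Bool) (T0 : Tab ℂ) {T : Tab ℂ} (hInt : IntEnt T) (j : ℕ) :
    PS T0 (flipT n b T) j =
      PS T0 T j - dlt n b T j - 2 * ∑ k ∈ Finset.Icc 1 (j - 1), dlt n b T k := by
  have e1 : PS T0 (flipT n b T) j =
      PS T0 T j - ∑ k ∈ Finset.Icc 1 j, (dlt n b T k + dlt n b T (k - 1)) := by
    rw [PS, PS, ← Finset.sum_sub_distrib]
    refine Finset.sum_congr rfl fun k _ => ?_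
    rw [ZW_flip b hInt]
    ring
  rw [e1, tele _ (dlt_zero n b T) j]
  ring

/-- Attach a leftmost primed column (determined by the weight) to a type-`D` tableau. -/
def attachT (n : ℕ) (W0 T : Tab ℂ) : Tab ℂ :=
  ⟨T.u, fun k i =>
    if i = 1 ∧ 1 ≤ k ∧ k ≤ n then
      W0.p k 1 - (((ZW T k - ZW (CtoD W0) k) / 2 : ℤ) : ℂ)
    else if i = 1 then 0 else T.p k i⟩

lemma attachT_p1 {n k : ℕ} (W0 T : Tab ℂ) (h : 1 ≤ k ∧ k ≤ n) :
    (attachT n W0 T).p k 1 = W0.p k 1 - (((ZW T k - ZW (CtoD W0) k) / 2 : ℤ) : ℂ) :=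
  if_pos ⟨rfl, h⟩

lemma attachT_p1' {n k : ℕ} (W0 T : Tab ℂ) (h : ¬(1 ≤ k ∧ k ≤ n)) :
    (attachT n W0 T).p k 1 = 0 := by
  show (if (1 : ℕ) = 1 ∧ 1 ≤ k ∧ k ≤ n then
      W0.p k 1 - (((ZW T k - ZW (CtoD W0) k) / 2 : ℤ) : ℂ)
    else if (1 : ℕ) = 1 then 0 else T.p k 1) = 0
  rw [if_neg (by tauto), if_pos rfl]

lemma attachT_pne {n k i : ℕ} (W0 T : Tab ℂ) (hi : i ≠ 1) :
    (attachT n W0 T).p k i = T.p k i := by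
  show (if i = 1 ∧ 1 ≤ k ∧ k ≤ n then
      W0.p k 1 - (((ZW T k - ZW (CtoD W0) k) / 2 : ℤ) : ℂ)
    else if i = 1 then 0 else T.p k i) = T.p k i
  rw [if_neg (by tauto), if_neg hi]

lemma CtoD_attachT {n : ℕ} {lam : Fin n → ℂ} (W0 : Tab ℂ) {T : Tab ℂ}
    (hTD : T ∈ DSt n lam) : CtoD (attachT n W0 T) = T := by
  refine Tab.ext' (fun k i => rfl) ?_
  intro k i
  show (if i = 1 then 0 else (attachT n W0 T).p k i) = T.p k i
  by_cases hi : i = 1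
  · rw [if_pos hi, hTD.1.2 k i (by omega)]
  · rw [if_neg hi, attachT_pne W0 T hi]

/-- Booleans recording the parity of the partial sums of relative integer weights. -/
def bbT (W0 T : Tab ℂ) (j : ℕ) : Bool := decide (PS (CtoD W0) T j % 2 = 1)

/-- Extension of a Boolean vector to a flip-selection function. -/
def extb (n : ℕ) (ε : Fin (n - 1) → Bool) : ℕ → Bool := fun j =>
  if h : 1 ≤ j ∧ j ≤ n - 1 then ε ⟨j - 1, by omega⟩ else false

lemma extb_eq {n : ℕ} (ε : Fin (n - 1) → Bool) {j : ℕ} (h : 1 ≤ j ∧ j ≤ n - 1) :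
    extb n ε j = ε ⟨j - 1, by omega⟩ := dif_pos h

/-- for every `C`-weight `γ` of `𝔅(μ,λ)`, the fiber of weight `γ` is finite
and `2^{n-1}` times its cardinality equals the cardinality of `D_st^λ`. -/
theorem weight_multiplicity (n : ℕ) (hn : 2 ≤ n) (mu lam : Fin n → ℂ)
    (hmu : ∀ i, ¬IsInt (mu i)) (hlam : ∀ i, IsHalfInt (lam i)) (hdom : SODominant lam)
    (W0 : Tab ℂ) (hW0 : W0 ∈ TabB n mu lam) :
    {W | W ∈ TabB n mu lam ∧ cwtv n W = cwtv n W0}.Finite ∧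
      2 ^ (n - 1) * {W | W ∈ TabB n mu lam ∧ cwtv n W = cwtv n W0}.ncard =
        (DSt n lam).ncard := by
  classical
  have hTrefD : CtoD W0 ∈ DSt n lam := hW0.2.2
  have hTrefInt : IntEnt (CtoD W0) := DSt_intEnt hlam hTrefD
  set C0 : Set (Tab ℂ) :=
    {T | T ∈ DSt n lam ∧ ∀ k, 2 ∣ (ZW T k - ZW (CtoD W0) k)} with hC0def
  set fib : Set (Tab ℂ) := {W | W ∈ TabB n mu lam ∧ cwtv n W = cwtv n W0} with hfibdef
  have hC0sub : C0 ⊆ DSt n lam := fun T hT => hT.1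
  have hDfin : (DSt n lam).Finite := DSt_finite n lam hlam
  have hC0fin : C0.Finite := hDfin.subset hC0sub
  -- weights of fiber elements
  have hwt : ∀ W ∈ fib, ∀ k, 1 ≤ k → k ≤ n →
      2 * W.p k 1 + wt k (CtoD W) = 2 * W0.p k 1 + wt k (CtoD W0) := by
    intro W hW k h1 hk
    have h' : wt (k - 1 + 1) W = wt (k - 1 + 1) W0 := congrFun hW.2 ⟨k - 1, by omega⟩
    rw [show k - 1 + 1 = k by omega] at h'
    rw [← wt_CtoD W k h1, ← wt_CtoD W0 k h1]
    exact h'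
  -- `CtoD` maps the fiber into `C0`
  have hfibmap : ∀ W ∈ fib, CtoD W ∈ C0 := by
    intro W hW
    refine ⟨hW.1.2.2, ?_⟩
    intro k
    rcases Nat.lt_or_ge k 1 with hk | hk
    · rw [ZW_out hW.1.2.2 hTrefD k (Or.inl (by omega))]
      simp
    rcases le_or_gt k n with hkn | hkn
    · have he := hwt W hW k hk hkn
      have hd := wt_sub_eq (DSt_intEnt hlam hW.1.2.2) hTrefInt k
      set j : Fin n := ⟨k - 1, by omega⟩ with hjdef
      have hjv : (j : ℕ) + 1 = k := by simp [hjdef]; omega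
      obtain ⟨z, hz⟩ := hW.1.2.1 j
      obtain ⟨z0, hz0⟩ := hW0.2.1 j
      rw [hjv] at hz hz0
      have hcast : ((ZW (CtoD W) k - ZW (CtoD W0) k : ℤ) : ℂ) = ((2 * (z0 - z) : ℤ) : ℂ) := by
        push_cast
        push_cast at hd
        linear_combination - hd + he + 2 * hz0 - 2 * hz
      have : ZW (CtoD W) k - ZW (CtoD W0) k = 2 * (z0 - z) := by exact_mod_cast hcast
      exact ⟨z0 - z, this⟩
    · rw [ZW_out hW.1.2.2 hTrefD k (Or.inr hkn)]
      simp
  -- `CtoD` is injective on the fiber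
  have hfibinj : Set.InjOn CtoD fib := by
    intro W hW W' hW' hEq
    have hu : ∀ k i, W.u k i = W'.u k i :=
      fun k i => congrFun (congrFun (congrArg Tab.u hEq) k) i
    have hp1 : ∀ k, 1 ≤ k → k ≤ n → W.p k 1 = W'.p k 1 := by
      intro k h1 hk
      have e1 := hwt W hW k h1 hk
      have e2 := hwt W' hW' k h1 hk
      rw [hEq] at e1
      have h2 : (2 : ℂ) ≠ 0 := two_ne_zero
      exact mul_left_cancel₀ h2 (by linear_combination e1 - e2)
    refine Tab.ext' hu ?_
    intro k i
    by_cases hi : i = 1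
    · subst hi
      by_cases hk : 1 ≤ k ∧ k ≤ n
      · exact hp1 k hk.1 hk.2
      · rw [hW.1.1.2 k 1 (by omega), hW'.1.1.2 k 1 (by omega)]
    · have h3 := congrFun (congrFun (congrArg Tab.p hEq) k) i
      rw [show (CtoD W).p k i = if i = 1 then 0 else W.p k i from rfl,
        show (CtoD W').p k i = if i = 1 then 0 else W'.p k i from rfl,
        if_neg hi, if_neg hi] at h3
      exact h3
  -- `CtoD` is surjective onto `C0`
  have hfibsurj : ∀ T ∈ C0, ∃ W ∈ fib, CtoD W = T := by
    intro T hT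
    obtain ⟨hTD, hTdvd⟩ := hT
    have hTInt : IntEnt T := DSt_intEnt hlam hTD
    have hCtoD : CtoD (attachT n W0 T) = T := CtoD_attachT W0 hTD
    have hdiv : ∀ k, (((ZW T k - ZW (CtoD W0) k) / 2 : ℤ) : ℂ) * 2 =
        ((ZW T k - ZW (CtoD W0) k : ℤ) : ℂ) := by
      intro k
      obtain ⟨c, hc⟩ := hTdvd k
      rw [hc, Int.mul_ediv_cancel_left c (by norm_num)]
      push_cast
      ring
    refine ⟨attachT n W0 T, ⟨⟨⟨hTD.1.1, ?_⟩, ?_, ?_⟩, ?_⟩, hCtoD⟩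
    · -- CNorm p
      intro k i h
      by_cases hi : i = 1
      · subst hi
        exact attachT_p1' W0 T (by omega)
      · rw [attachT_pne W0 T hi]
        exact hTD.1.2 k i (by omega)
    · -- μ-condition
      intro k
      rw [attachT_p1 W0 T ⟨by omega, by omega⟩]
      obtain ⟨z0, hz0⟩ := hW0.2.1 k
      exact ⟨z0 - (ZW T ((k : ℕ) + 1) - ZW (CtoD W0) ((k : ℕ) + 1)) / 2, by
        push_cast
        linear_combination hz0⟩
    · -- CtoD ∈ DSt
      rw [hCtoD]; exact hTD
    · -- weight
      funext k
      show wt ((k : ℕ) + 1) (attachT n W0 T) = wt ((k : ℕ) + 1) W0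
      have hA := wt_CtoD (attachT n W0 T) ((k : ℕ) + 1) (by omega)
      have hB := wt_CtoD W0 ((k : ℕ) + 1) (by omega)
      have hd := wt_sub_eq hTInt hTrefInt ((k : ℕ) + 1)
      rw [hCtoD] at hA
      rw [hA, attachT_p1 W0 T ⟨by omega, by omega⟩, hB]
      have hdv := hdiv ((k : ℕ) + 1)
      push_cast at hd hdv ⊢
      linear_combination hd - hdv
  -- image and cardinality of the fiber
  have himg : CtoD '' fib = C0 := by
    apply Set.Subset.antisymm
    · rintro _ ⟨W, hW, rfl⟩; exact hfibmap W hW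
    · intro T hT
      obtain ⟨W, hW, hWT⟩ := hfibsurj T hT
      exact ⟨W, hW, hWT⟩
  have hfibfin : fib.Finite := Set.Finite.of_finite_image (himg ▸ hC0fin) hfibinj
  have hfibcard : fib.ncard = C0.ncard := by
    rw [← himg, Set.ncard_image_of_injOn hfibinj]
  -- the flip machinery: `DSt ≃ Bool^{n-1} × C0`
  have hPSmod0 : ∀ T ∈ C0, ∀ j, PS (CtoD W0) T j % 2 = 0 := by
    intro T hT j
    have : (2 : ℤ) ∣ PS (CtoD W0) T j := Finset.dvd_sum fun k _ => hT.2 k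
    omega
  have hPSn : ∀ T ∈ DSt n lam, PS (CtoD W0) T n % 2 = 0 := by
    intro T hT
    have := ZW_total hT hTrefD
    rw [show (∑ k ∈ Finset.Icc 1 n, (ZW T k - ZW (CtoD W0) k)) = PS (CtoD W0) T n from rfl]
      at this
    omega
  have hdltmod : ∀ T ∈ DSt n lam, ∀ k, 1 ≤ k → k ≤ n →
      dlt n (bbT W0 T) T k % 2 = PS (CtoD W0) T k % 2 := by
    intro T hT k h1 hk
    rw [dlt_mod]
    by_cases hk1 : k ≤ n - 1
    · by_cases hb : bbT W0 T k = true
      · rw [if_pos ⟨h1, hk1, hb⟩]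
        have := of_decide_eq_true hb
        omega
      · rw [if_neg (by tauto)]
        have : ¬ (PS (CtoD W0) T k % 2 = 1) := fun h => hb (decide_eq_true h)
        omega
    · have hkn : k = n := by omega
      rw [if_neg (by omega)]
      rw [hkn]
      exact (hPSn T hT).symm
  have hmemflip : ∀ T ∈ DSt n lam, flipT n (bbT W0 T) T ∈ C0 := by
    intro T hT
    have hInt : IntEnt T := DSt_intEnt hlam hT
    have hflipD : flipT n (bbT W0 T) T ∈ DSt n lam := flipT_mem (by omega) _ hT
    refine ⟨hflipD, ?_⟩
    intro k
    rcases Nat.lt_or_ge k 1 with hk | hk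
    · rw [ZW_out hflipD hTrefD k (Or.inl (by omega))]; simp
    rcases le_or_gt k n with hkn | hkn
    · rw [ZW_flip (bbT W0 T) hInt k]
      have e0 := PS_step (CtoD W0) T k hk
      have e1 := hdltmod T hT k hk hkn
      have e2 : dlt n (bbT W0 T) T (k - 1) % 2 = PS (CtoD W0) T (k - 1) % 2 := by
        rcases Nat.lt_or_ge (k - 1) 1 with h | h
        · rw [show k - 1 = 0 by omega, dlt_zero, show PS (CtoD W0) T 0 = 0 from by
            simp [PS]]
        · exact hdltmod T hT (k - 1) h (by omega)
      omega
    · rw [ZW_out hflipD hTrefD k (Or.inr hkn)]; simp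
  have hPSflip : ∀ T ∈ C0, ∀ b : ℕ → Bool, ∀ j, 1 ≤ j → j ≤ n - 1 →
      PS (CtoD W0) (flipT n b T) j % 2 = (if b j = true then 1 else 0) := by
    intro T hT b j h1 hj
    have hInt : IntEnt T := DSt_intEnt hlam hT.1
    have := PS_flip (n := n) b (CtoD W0) hInt j
    have h0 := hPSmod0 T hT j
    have hdm := dlt_mod n b T j
    by_cases hb : b j = true
    · rw [if_pos hb]
      rw [if_pos ⟨h1, hj, hb⟩] at hdm
      omega
    · rw [if_neg hb]
      rw [if_neg (by tauto)] at hdm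
      omega
  -- the equivalence
  have hC0mem : ∀ x : (Fin (n - 1) → Bool) × ↥C0, flipT n (extb n x.1) (x.2 : Tab ℂ) ∈ DSt n lam :=
    fun x => flipT_mem (by omega) _ (hC0sub x.2.2)
  let eqv : ↥(DSt n lam) ≃ ((Fin (n - 1) → Bool) × ↥C0) :=
  { toFun := fun T => (fun j => bbT W0 (T : Tab ℂ) ((j : ℕ) + 1),
      ⟨flipT n (bbT W0 (T : Tab ℂ)) (T : Tab ℂ), hmemflip _ T.2⟩)
    invFun := fun x => ⟨flipT n (extb n x.1) (x.2 : Tab ℂ), hC0mem x⟩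
    left_inv := by
      rintro ⟨T, hT⟩
      apply Subtype.ext
      show flipT n (extb n fun j => bbT W0 T ((j : ℕ) + 1)) (flipT n (bbT W0 T) T) = T
      rw [flipT_congr n (flipT n (bbT W0 T) T)
        (b' := bbT W0 T) (fun j h1 hj => by
          rw [extb_eq _ ⟨h1, hj⟩]
          show bbT W0 T (j - 1 + 1) = bbT W0 T j
          congr 1
          omega),
        flipT_flipT]
    right_inv := by
      rintro ⟨ε, T, hT⟩
      have hagree : ∀ j, 1 ≤ j → j ≤ n - 1 →
          bbT W0 (flipT n (extb n ε) T) j = extb n ε j := by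
        intro j h1 hj
        have := hPSflip T hT (extb n ε) j h1 hj
        by_cases hb : extb n ε j = true
        · rw [if_pos hb] at this
          rw [hb]
          exact decide_eq_true this
        · rw [if_neg hb] at this
          rw [Bool.not_eq_true] at hb
          rw [hb]
          rw [bbT, decide_eq_false_iff_not]
          omega
      have hcomp : ∀ j : Fin (n - 1), bbT W0 (flipT n (extb n ε) T) ((j : ℕ) + 1) = ε j := by
        intro j
        rw [hagree ((j : ℕ) + 1) (by omega) (by omega : (j : ℕ) + 1 ≤ n - 1),
          extb_eq _ ⟨by omega, by omega⟩]
        exact congrArg ε (Fin.ext rfl)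
      have h2 : flipT n (bbT W0 (flipT n (extb n ε) T)) (flipT n (extb n ε) T) = T := by
        rw [flipT_congr n (flipT n (extb n ε) T) (b' := extb n ε) hagree, flipT_flipT]
      show ((fun j => bbT W0 (flipT n (extb n ε) T) ((j : ℕ) + 1),
        (⟨flipT n (bbT W0 (flipT n (extb n ε) T)) (flipT n (extb n ε) T),
          hmemflip _ (hC0mem (ε, ⟨T, hT⟩))⟩ : ↥C0)) :
          (Fin (n - 1) → Bool) × ↥C0) = (ε, ⟨T, hT⟩)
      exact Prod.ext (funext hcomp) (Subtype.ext h2) }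
  -- conclude
  have hDcard : Nat.card ↥(DSt n lam) = 2 ^ (n - 1) * Nat.card ↥C0 := by
    rw [Nat.card_congr eqv, Nat.card_prod]
    congr 1
    simp [Nat.card_eq_fintype_card]
  refine ⟨hfibfin, ?_⟩
  have e1 : Nat.card ↥fib = Nat.card ↥C0 := by
    rw [Nat.card_coe_set_eq, Nat.card_coe_set_eq, hfibcard]
  rw [← Nat.card_coe_set_eq, ← Nat.card_coe_set_eq, hDcard, e1]

end GTpaper
end
end

section
/- Let μ ∈ (ℂ∖ℤ)^n, let λ ∈ (1/2+ℤ)^n be a dominant so(2n)-weight, fix k ∈ [n], and let T(L) ∈ B(μ,λ) satisfy ℓ'_{k1} = 1/2, ℓ'_{kk} = ℓ_{kk}, and ℓ_{ki} = ℓ'_{ki} = ℓ_{k−1,i} for all 2 ≤ i ≤ k−1. Then, in each case under the assumption that all denominators occurring in the expression are nonzero: (i) B_{ki}(L) = 0 for every i ∈ [k]; (ii) B_{kr}(L−δ^{(k−1,s)}) = 0 for every s ∈ [k−1] and every 2 ≤ r ≤ k−1; (iii) B_{kt}(L+δ^{(ki)'}+δ^{(k−1,j)}) = 0 for all 1 ≤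 t ≠ i ≤ k and every j ∈ [k−1]; (iv) B_{kj}(L+δ^{(kj)'}+δ^{(k−1,j)}) = 0 for every 2 ≤ j ≤ k−1; (v) D_{kijm}(L) = 0 whenever i ∈ [k], j, m ∈ [k−1], j ≠ 1 and i ≠ j. -/
open scoped BigOperators Classical

noncomputable section

namespace GTpaper

attribute [local instance 100] LieRing.ofAssociativeRing

end GTpaper

namespace GTpaper

@[simp] lemma Tab.addZ_u' (L : Tab ℂ) (Z : Tab ℤ) (k i : ℕ) :
    (L.addZ Z).u k i = L.u k i + (Z.u k i : ℂ) := rfl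

@[simp] lemma Tab.addZ_p' (L : Tab ℂ) (Z : Tab ℤ) (k i : ℕ) :
    (L.addZ Z).p k i = L.p k i + (Z.p k i : ℂ) := rfl

@[simp] lemma Tab.add_u' (a b : Tab ℤ) (k i : ℕ) : (a + b).u k i = a.u k i + b.u k i := rfl
@[simp] lemma Tab.add_p' (a b : Tab ℤ) (k i : ℕ) : (a + b).p k i = a.p k i + b.p k i := rfl
@[simp] lemma Tab.neg_u' (a : Tab ℤ) (k i : ℕ) : (-a).u k i = -a.u k i := rfl
@[simp] lemma Tab.neg_p' (a : Tab ℤ) (k i : ℕ) : (-a).p k i = -a.p k i := rfl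

@[simp] lemma deltaU_u' (k i a b : ℕ) :
    (deltaU k i).u a b = if a = k ∧ b = i then 1 else 0 := rfl
@[simp] lemma deltaU_p' (k i a b : ℕ) : (deltaU k i).p a b = 0 := rfl
@[simp] lemma deltaP_u' (k i a b : ℕ) : (deltaP k i).u a b = 0 := rfl
@[simp] lemma deltaP_p' (k i a b : ℕ) :
    (deltaP k i).p a b = if a = k ∧ b = i then 1 else 0 := rfl

/-- If an unprimed entry of row `k` coincides with `ℓ'_{ki}`, then `B_{ki}` vanishes. -/
lemma coB_eq_zero_of_u (k i : ℕ) (M : Tab ℂ) (a : ℕ) (ha : a ∈ Finset.Icc 1 k)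
    (h : M.u k a = M.p k i) : coB k i M = 0 := by
  have hz : (∏ b ∈ Finset.Icc 1 k, (M.u k b - M.p k i)) = 0 :=
    Finset.prod_eq_zero ha (by rw [h]; ring)
  rw [coB, hz]; ring

/-- If an unprimed entry of row `k-1` coincides with `ℓ'_{ki}`, then `B_{ki}` vanishes. -/
lemma coB_eq_zero_of_u'' (k i : ℕ) (M : Tab ℂ) (a : ℕ) (ha : a ∈ Finset.Icc 1 (k - 1))
    (h : M.u (k - 1) a = M.p k i) : coB k i M = 0 := by
  have hz : (∏ b ∈ Finset.Icc 1 (k - 1), (M.u (k - 1) b - M.p k i)) = 0 :=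
    Finset.prod_eq_zero ha (by rw [h]; ring)
  rw [coB, hz]; ring

/-- If `ℓ'_{ki} = 1/2`, then `B_{ki}` vanishes. -/
lemma coB_eq_zero_of_half (k i : ℕ) (M : Tab ℂ) (h : M.p k i = 1 / 2) :
    coB k i M = 0 := by
  rw [coB, h]; ring

/-- Lemma "some identities": vanishing of the coefficients `B` and `D` on
tableaux `T(L) ∈ 𝔅(μ,λ)` with `ℓ'_{k1} = 1/2`, `ℓ'_{kk} = ℓ_{kk}` and
`ℓ_{ki} = ℓ'_{ki} = ℓ_{k-1,i}` for `2 ≤ i ≤ k-1`. -/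
theorem some_identities (n : ℕ) (hn : 2 ≤ n) (mu lam : Fin n → ℂ)
    (hmu : ∀ i, ¬IsInt (mu i)) (hlam : ∀ i, IsHalfInt (lam i)) (hdom : SODominant lam)
    (k : ℕ) (hk1 : 1 ≤ k) (hk : k ≤ n)
    (L : Tab ℂ) (hL : L ∈ TabB n mu lam)
    (h1 : L.p k 1 = 1 / 2) (h2 : L.p k k = L.u k k)
    (h3 : ∀ i, 2 ≤ i → i ≤ k - 1 → L.u k i = L.p k i ∧ L.p k i = L.u (k - 1) i) :
    (∀ i, 1 ≤ i → i ≤ k → coB k i L = 0) ∧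
    (∀ s r, 1 ≤ s → s ≤ k - 1 → 2 ≤ r → r ≤ k - 1 →
      coB k r (L.addZ (-deltaU (k - 1) s)) = 0) ∧
    (∀ t i j, 1 ≤ t → t ≤ k → 1 ≤ i → i ≤ k → t ≠ i → 1 ≤ j → j ≤ k - 1 →
      coB k t (L.addZ (deltaP k i + deltaU (k - 1) j)) = 0) ∧
    (∀ j, 2 ≤ j → j ≤ k - 1 → coB k j (L.addZ (deltaP k j + deltaU (k - 1) j)) = 0) ∧
    (∀ i j m, 1 ≤ i → i ≤ k → 1 ≤ j → j ≤ k - 1 → 1 ≤ m → m ≤ k - 1 → j ≠ 1 → i ≠ j →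
      coD k i j m L = 0) := by
  refine ⟨?_, ?_, ?_, ?_, ?_⟩
  · -- (i)
    intro i hi1 hi2
    by_cases hone : i = 1
    · exact coB_eq_zero_of_half k i L (hone ▸ h1)
    · by_cases hkk : i = k
      · exact coB_eq_zero_of_u k i L k (Finset.mem_Icc.mpr ⟨hk1, le_rfl⟩)
          (by rw [hkk]; exact h2.symm)
      · exact coB_eq_zero_of_u k i L i (Finset.mem_Icc.mpr ⟨hi1, hi2⟩)
          (h3 i (by omega) (by omega)).1
  · -- (ii)
    intro s r hs1 hs2 hr2 hr3
    refine coB_eq_zero_of_u k r _ r (Finset.mem_Icc.mpr ⟨by omega, by omega⟩) ?_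
    have e1 : (L.addZ (-deltaU (k - 1) s)).u k r = L.u k r := by
      simp [show k ≠ k - 1 from by omega]
    have e2 : (L.addZ (-deltaU (k - 1) s)).p k r = L.p k r := by simp
    rw [e1, e2]; exact (h3 r hr2 hr3).1
  · -- (iii)
    intro t i j ht1 ht2 hi1 hi2 hti hj1 hj2
    by_cases hone : t = 1
    · refine coB_eq_zero_of_half k t _ ?_
      subst hone
      have e : (L.addZ (deltaP k i + deltaU (k - 1) j)).p k 1 = L.p k 1 := by
        simp [show ¬(1 = i) from by omega]
      rw [e]; exact h1
    · by_cases hkk : t = k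
      · refine coB_eq_zero_of_u k t _ k (Finset.mem_Icc.mpr ⟨hk1, le_rfl⟩) ?_
        subst hkk
        have e1 : (L.addZ (deltaP t i + deltaU (t - 1) j)).u t t = L.u t t := by
          simp [show t ≠ t - 1 from by omega]
        have e2 : (L.addZ (deltaP t i + deltaU (t - 1) j)).p t t = L.p t t := by
          simp [show ¬(t = i) from by omega]
        rw [e1, e2]; exact h2.symm
      · refine coB_eq_zero_of_u k t _ t (Finset.mem_Icc.mpr ⟨ht1, ht2⟩) ?_
        have e1 : (L.addZ (deltaP k i + deltaU (k - 1) j)).u k t = L.u k t := by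
          simp [show k ≠ k - 1 from by omega]
        have e2 : (L.addZ (deltaP k i + deltaU (k - 1) j)).p k t = L.p k t := by
          simp [show ¬(t = i) from by omega]
        rw [e1, e2]; exact (h3 t (by omega) (by omega)).1
  · -- (iv)
    intro j hj2 hj3
    refine coB_eq_zero_of_u'' k j _ j (Finset.mem_Icc.mpr ⟨by omega, hj3⟩) ?_
    have e1 : (L.addZ (deltaP k j + deltaU (k - 1) j)).u (k - 1) j = L.u (k - 1) j + 1 := by
      simp
    have e2 : (L.addZ (deltaP k j + deltaU (k - 1) j)).p k j = L.p k j + 1 := by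
      simp
    rw [e1, e2, (h3 j hj2 hj3).2]
  · -- (v)
    intro i j m hi1 hi2 hj1 hj2 hm1 hm2 hjne hij
    have hz : (∏ a ∈ (Finset.Icc 1 k).erase i, (L.u (k - 1) j ^ 2 - L.p k a ^ 2)) = 0 := by
      refine Finset.prod_eq_zero (Finset.mem_erase.mpr
        ⟨fun h => hij h.symm, Finset.mem_Icc.mpr ⟨hj1, by omega⟩⟩) ?_
      have := (h3 j (by omega) hj2).2
      rw [← this]; ring
    rw [coD, hz]; ring

end GTpaper
end
end

section
/- Let μ ∈ (ℂ∖ℤ)^n with μ_k ∈ 1/2+ℤ for a fixed k ∈ [n], and let λ ∈ (1/2+ℤ)^n be a dominant so(2n)-weight. For type-D tableaux T(R), T(W) define S_j(R−W) = ∑_{i=1}^{j}(r_{ji} − w_{ji}) and S'_j(R−W) = ∑_{i=2}^{j}(r'_{ji} − w'_{ji}) (with S_0 = 0), and set t_k(λ) = max over all pairs T(R), T(W) ∈ D_st^λ of ⌊S'_k(R−W) − (1/2)S_k(R−W) − (1/2)S_{k−1}(R−W)⌋. Set B_k^+(μ,λ) = {T(W) ∈ B(μ,λ) : w'_{k1}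 − 1/2 ∈ ℤ≥0}. If T(W) ∈ B_k^+(μ,λ) satisfies w'_{k1} − 1/2 − t_k(λ) ∈ ℤ≥0, then every T(U) ∈ B(μ,λ) with ω(T(U)) = ω(T(W)) belongs to B_k^+(μ,λ). -/
open scoped BigOperators Classical

noncomputable section

namespace GTpaper

attribute [local instance 100] LieRing.ofAssociativeRing

end GTpaper

namespace GTpaper

/-- `t_k(λ)`: the maximum over pairs `T(R), T(W) ∈ D_st^λ` of
`⌊S'_k(R-W) - (1/2)S_k(R-W) - (1/2)S_{k-1}(R-W)⌋` (a `1`-based row index `k`). -/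
def tkval (n : ℕ) (lam : Fin n → ℂ) (k : ℕ) : ℤ :=
  sSup {t : ℤ | ∃ R ∈ DSt n lam, ∃ W ∈ DSt n lam,
    t = ⌊((∑ i ∈ Finset.Icc 2 k, (R.p k i - W.p k i)) -
          (1 / 2) * (∑ i ∈ Finset.Icc 1 k, (R.u k i - W.u k i)) -
          (1 / 2) * (∑ i ∈ Finset.Icc 1 (k - 1), (R.u (k - 1) i - W.u (k - 1) i))).re⌋}


lemma intGE_re {a b : ℂ} (h : IntGE a b) : b.re ≤ a.re := by
  obtain ⟨m, rfl⟩ := h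
  simp [Complex.add_re, Complex.natCast_re]

lemma intGT_re {a b : ℂ} (h : IntGT a b) : b.re + 1 ≤ a.re := by
  obtain ⟨m, rfl⟩ := h
  simp [Complex.add_re, Complex.natCast_re, Complex.one_re]

/-- All entries of a `D`-standard tableau with fixed top row are bounded. -/
lemma entry_bound {n : ℕ} {lam : Fin n → ℂ} {T : Tab ℂ} (hT : T ∈ DSt n lam)
    {M : ℝ} (hM : ∀ i : Fin n, |(lam i - (((i : ℕ) : ℂ) + 1) + 3 / 2).re| ≤ M) :
    ∀ d k, k + d = n → (∀ i, 1 ≤ i → i ≤ k → |(T.u k i).re| ≤ M) ∧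
      (∀ i, 2 ≤ i → i ≤ k → |(T.p k i).re| ≤ M) := by
  obtain ⟨-, hstd, htop⟩ := hT
  intro d
  induction d with
  | zero =>
    intro k hk
    have hkn : n = k := by omega
    subst hkn
    have hu : ∀ i, 1 ≤ i → i ≤ n → |(T.u n i).re| ≤ M := by
      intro i h1 hin
      have hlt : i - 1 < n := by omega
      have h2 := htop ⟨i - 1, hlt⟩
      have h3 : i - 1 + 1 = i := by omega
      rw [h3] at h2
      rw [h2]
      have h4 := hM ⟨i - 1, hlt⟩
      simpa using h4
    refine ⟨hu, ?_⟩
    intro i h2 hin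
    have h2n : 2 ≤ n := h2.trans hin
    have hst := hstd n h2n le_rfl
    have hle := intGE_re (hst.2.1 i h2 hin)
    have hlt := intGT_re (hst.2.2.1 (i - 1) (by omega) (by omega))
    rw [show i - 1 + 1 = i from by omega] at hlt
    have b1 := abs_le.1 (hu i (by omega) hin)
    have b2 := abs_le.1 (hu (i - 1) (by omega) (by omega))
    rw [abs_le]
    constructor <;> linarith
  | succ d ih =>
    intro k hk
    rcases Nat.eq_zero_or_pos k with h0 | h1
    · subst h0
      exact ⟨fun i h1 hik => absurd (h1.trans hik) (by omega),
             fun i h2 hik => absurd (h2.trans hik) (by omega)⟩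
    obtain ⟨ihu, ihp⟩ := ih (k + 1) (by omega)
    have hst := hstd (k + 1) (by omega) (by omega)
    simp only [Nat.add_sub_cancel] at hst
    have hu : ∀ i, 1 ≤ i → i ≤ k → |(T.u k i).re| ≤ M := by
      intro i hi1 hik
      have hlow := intGT_re (hst.2.2.2.2.2 i hi1 hik)
      have hplow := (abs_le.1 (ihp (i + 1) (by omega) (by omega))).1
      have hup : (T.u k i).re ≤ M := by
        by_cases hi : i = 1
        · subst hi
          have h5 := intGE_re hst.2.2.2.1
          have hp2 := (abs_le.1 (ihp 2 le_rfl (by omega))).1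
          rw [Complex.neg_re] at h5
          linarith
        · have h5 := intGE_re (hst.2.2.2.2.1 i (by omega) hik)
          have h6 := (abs_le.1 (ihp i (by omega) (by omega))).2
          linarith
      rw [abs_le]
      exact ⟨by linarith, hup⟩
    refine ⟨hu, ?_⟩
    intro i h2 hik
    have hk2 : 2 ≤ k := h2.trans hik
    have hstk := hstd k hk2 (by omega)
    have hle := intGE_re (hstk.2.1 i h2 hik)
    have hlt := intGT_re (hstk.2.2.1 (i - 1) (by omega) (by omega))
    rw [show i - 1 + 1 = i from by omega] at hlt
    have b1 := abs_le.1 (hu i (by omega) hik)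
    have b2 := abs_le.1 (hu (i - 1) (by omega) (by omega))
    rw [abs_le]
    constructor <;> linarith

/-- The defining set of `tkval` is bounded above. -/
lemma tk_bdd (n : ℕ) (lam : Fin n → ℂ) (K : ℕ) (hKn : K ≤ n) :
    BddAbove {t : ℤ | ∃ R ∈ DSt n lam, ∃ W ∈ DSt n lam,
      t = ⌊((∑ i ∈ Finset.Icc 2 K, (R.p K i - W.p K i)) -
            (1 / 2) * (∑ i ∈ Finset.Icc 1 K, (R.u K i - W.u K i)) -
            (1 / 2) * (∑ i ∈ Finset.Icc 1 (K - 1), (R.u (K - 1) i - W.u (K - 1) i))).re⌋} := by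
  classical
  obtain ⟨M, hM, hM0⟩ : ∃ M : ℝ,
      (∀ i : Fin n, |(lam i - (((i : ℕ) : ℂ) + 1) + 3 / 2).re| ≤ M) ∧ 0 ≤ M :=
    ⟨∑ i : Fin n, |(lam i - (((i : ℕ) : ℂ) + 1) + 3 / 2).re|,
      fun i => Finset.single_le_sum
        (f := fun j : Fin n => |(lam j - (((j : ℕ) : ℂ) + 1) + 3 / 2).re|)
        (fun _ _ => abs_nonneg _) (Finset.mem_univ i),
      Finset.sum_nonneg fun _ _ => abs_nonneg _⟩
  refine ⟨⌊(4 * (n : ℝ)) * M⌋, ?_⟩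
  rintro t ⟨R, hR, W, hW, rfl⟩
  apply Int.floor_le_floor
  have hs : ∀ (s : Finset ℕ) (f g : ℕ → ℂ),
      (∀ i ∈ s, |(f i).re| ≤ M ∧ |(g i).re| ≤ M) → s.card ≤ n →
      |(∑ i ∈ s, (f i - g i)).re| ≤ (n : ℝ) * (2 * M) := by
    intro s f g h hcard
    rw [Complex.re_sum]
    calc |∑ i ∈ s, (f i - g i).re| ≤ ∑ i ∈ s, |(f i - g i).re| :=
          Finset.abs_sum_le_sum_abs _ _
      _ ≤ ∑ _i ∈ s, 2 * M := by
          refine Finset.sum_le_sum fun i hi => ?_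
          obtain ⟨h1, h2⟩ := h i hi
          rw [Complex.sub_re, abs_le]
          constructor <;> [skip; skip] <;>
            [linarith [(abs_le.1 h1).1, (abs_le.1 h2).2];
             linarith [(abs_le.1 h1).2, (abs_le.1 h2).1]]
      _ = (s.card : ℝ) * (2 * M) := by rw [Finset.sum_const, nsmul_eq_mul]
      _ ≤ (n : ℝ) * (2 * M) := by
          have : (s.card : ℝ) ≤ (n : ℝ) := by exact_mod_cast hcard
          nlinarith
  have eR := entry_bound hR hM
  have eW := entry_bound hW hM
  have b1 : |(∑ i ∈ Finset.Icc 2 K, (R.p K i - W.p K i)).re| ≤ (n : ℝ) * (2 * M) := by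
    refine hs _ _ _ (fun i hi => ?_) (by rw [Nat.card_Icc]; omega)
    obtain ⟨hi2, hiK⟩ := Finset.mem_Icc.1 hi
    exact ⟨(eR (n - K) K (by omega)).2 i hi2 hiK, (eW (n - K) K (by omega)).2 i hi2 hiK⟩
  have b2 : |(∑ i ∈ Finset.Icc 1 K, (R.u K i - W.u K i)).re| ≤ (n : ℝ) * (2 * M) := by
    refine hs _ _ _ (fun i hi => ?_) (by rw [Nat.card_Icc]; omega)
    obtain ⟨hi1, hiK⟩ := Finset.mem_Icc.1 hi
    exact ⟨(eR (n - K) K (by omega)).1 i hi1 hiK, (eW (n - K) K (by omega)).1 i hi1 hiK⟩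
  have b3 : |(∑ i ∈ Finset.Icc 1 (K - 1), (R.u (K - 1) i - W.u (K - 1) i)).re| ≤
      (n : ℝ) * (2 * M) := by
    refine hs _ _ _ (fun i hi => ?_) (by rw [Nat.card_Icc]; omega)
    obtain ⟨hi1, hiK⟩ := Finset.mem_Icc.1 hi
    exact ⟨(eR (n - (K - 1)) (K - 1) (by omega)).1 i hi1 hiK,
           (eW (n - (K - 1)) (K - 1) (by omega)).1 i hi1 hiK⟩
  have hre : ((∑ i ∈ Finset.Icc 2 K, (R.p K i - W.p K i)) -
      (1 / 2) * (∑ i ∈ Finset.Icc 1 K, (R.u K i - W.u K i)) -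
      (1 / 2) * (∑ i ∈ Finset.Icc 1 (K - 1), (R.u (K - 1) i - W.u (K - 1) i))).re =
      (∑ i ∈ Finset.Icc 2 K, (R.p K i - W.p K i)).re -
      (1 / 2) * (∑ i ∈ Finset.Icc 1 K, (R.u K i - W.u K i)).re -
      (1 / 2) * (∑ i ∈ Finset.Icc 1 (K - 1), (R.u (K - 1) i - W.u (K - 1) i)).re := by
    simp [Complex.sub_re, Complex.mul_re]
  rw [hre]
  have a1 := abs_le.1 b1
  have a2 := abs_le.1 b2
  have a3 := abs_le.1 b3
  nlinarith [a1.1, a1.2, a2.1, a2.2, a3.1, a3.2]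

/-- if `T(W) ∈ 𝔅_k^+(μ,λ)` satisfies `w'_{k1} - 1/2 - t_k(λ) ∈ ℤ≥0`, then
every tableau of `𝔅(μ,λ)` with the same `C`-weight as `T(W)` lies in `𝔅_k^+(μ,λ)`. -/
theorem essential_support (n : ℕ) (hn : 2 ≤ n) (mu lam : Fin n → ℂ)
    (hmu : ∀ i, ¬IsInt (mu i)) (hlam : ∀ i, IsHalfInt (lam i)) (hdom : SODominant lam)
    (k : Fin n) (hmuk : IsHalfInt (mu k))
    (W : Tab ℂ) (hW : W ∈ BkPlus n mu lam ((k : ℕ) + 1))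
    (ht : IntGE (W.p ((k : ℕ) + 1) 1) (1 / 2 + (tkval n lam ((k : ℕ) + 1) : ℂ))) :
    ∀ U ∈ TabB n mu lam, (∀ j : Fin n, wt ((j : ℕ) + 1) U = wt ((j : ℕ) + 1) W) →
      U ∈ BkPlus n mu lam ((k : ℕ) + 1) := by
  intro U hU hwt
  obtain ⟨hWB, -⟩ := hW
  refine ⟨hU, ?_⟩
  have hKn : (k : ℕ) + 1 ≤ n := k.isLt
  obtain ⟨a, ha⟩ := hU.2.1 k
  obtain ⟨b, hb⟩ := hWB.2.1 k
  have hd : U.p ((k : ℕ) + 1) 1 = W.p ((k : ℕ) + 1) 1 + ((a : ℂ) - (b : ℂ)) := by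
    linear_combination ha - hb
  have hwk := hwt k
  unfold wt at hwk
  simp only [Nat.add_sub_cancel] at hwk
  have hsU : ∑ i ∈ Finset.Icc 1 ((k : ℕ) + 1), U.p ((k : ℕ) + 1) i =
      U.p ((k : ℕ) + 1) 1 + ∑ i ∈ Finset.Icc 2 ((k : ℕ) + 1), U.p ((k : ℕ) + 1) i := by
    rw [show Finset.Icc 1 ((k : ℕ) + 1) = insert 1 (Finset.Icc 2 ((k : ℕ) + 1)) from by
      ext x; simp [Finset.mem_Icc, Finset.mem_insert]; omega]
    rw [Finset.sum_insert (by simp)]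
  have hsW : ∑ i ∈ Finset.Icc 1 ((k : ℕ) + 1), W.p ((k : ℕ) + 1) i =
      W.p ((k : ℕ) + 1) 1 + ∑ i ∈ Finset.Icc 2 ((k : ℕ) + 1), W.p ((k : ℕ) + 1) i := by
    rw [show Finset.Icc 1 ((k : ℕ) + 1) = insert 1 (Finset.Icc 2 ((k : ℕ) + 1)) from by
      ext x; simp [Finset.mem_Icc, Finset.mem_insert]; omega]
    rw [Finset.sum_insert (by simp)]
  have hA : ∑ i ∈ Finset.Icc 2 ((k : ℕ) + 1),
        ((CtoD U).p ((k : ℕ) + 1) i - (CtoD W).p ((k : ℕ) + 1) i) =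
      ∑ i ∈ Finset.Icc 2 ((k : ℕ) + 1), (U.p ((k : ℕ) + 1) i - W.p ((k : ℕ) + 1) i) := by
    refine Finset.sum_congr rfl fun i hi => ?_
    have h2 := (Finset.mem_Icc.1 hi).1
    simp [CtoD, show i ≠ 1 from by omega]
  have hB : ∑ i ∈ Finset.Icc 1 ((k : ℕ) + 1),
        ((CtoD U).u ((k : ℕ) + 1) i - (CtoD W).u ((k : ℕ) + 1) i) =
      ∑ i ∈ Finset.Icc 1 ((k : ℕ) + 1), (U.u ((k : ℕ) + 1) i - W.u ((k : ℕ) + 1) i) := rfl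
  have hC : ∑ i ∈ Finset.Icc 1 ((k : ℕ) + 1 - 1),
        ((CtoD U).u ((k : ℕ) + 1 - 1) i - (CtoD W).u ((k : ℕ) + 1 - 1) i) =
      ∑ i ∈ Finset.Icc 1 ((k : ℕ)), (U.u ((k : ℕ)) i - W.u ((k : ℕ)) i) := by
    simp only [Nat.add_sub_cancel]; rfl
  have hbody : ((∑ i ∈ Finset.Icc 2 ((k : ℕ) + 1),
        ((CtoD U).p ((k : ℕ) + 1) i - (CtoD W).p ((k : ℕ) + 1) i)) -
      (1 / 2) * (∑ i ∈ Finset.Icc 1 ((k : ℕ) + 1),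
        ((CtoD U).u ((k : ℕ) + 1) i - (CtoD W).u ((k : ℕ) + 1) i)) -
      (1 / 2) * (∑ i ∈ Finset.Icc 1 ((k : ℕ) + 1 - 1),
        ((CtoD U).u ((k : ℕ) + 1 - 1) i - (CtoD W).u ((k : ℕ) + 1 - 1) i))) =
      -((a : ℂ) - (b : ℂ)) := by
    rw [hA, hB, hC]
    rw [Finset.sum_sub_distrib, Finset.sum_sub_distrib, Finset.sum_sub_distrib]
    linear_combination (1 / 2 : ℂ) * hwk - hsU + hsW - hd
  have hfl : -(a - b) = ⌊((∑ i ∈ Finset.Icc 2 ((k : ℕ) + 1),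
        ((CtoD U).p ((k : ℕ) + 1) i - (CtoD W).p ((k : ℕ) + 1) i)) -
      (1 / 2) * (∑ i ∈ Finset.Icc 1 ((k : ℕ) + 1),
        ((CtoD U).u ((k : ℕ) + 1) i - (CtoD W).u ((k : ℕ) + 1) i)) -
      (1 / 2) * (∑ i ∈ Finset.Icc 1 ((k : ℕ) + 1 - 1),
        ((CtoD U).u ((k : ℕ) + 1 - 1) i - (CtoD W).u ((k : ℕ) + 1 - 1) i))).re⌋ := by
    rw [hbody]
    have : (-((a : ℂ) - (b : ℂ))).re = ((-(a - b) : ℤ) : ℝ) := by push_cast; simp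
    rw [this, Int.floor_intCast]
  have hle : -(a - b) ≤ tkval n lam ((k : ℕ) + 1) :=
    le_csSup (tk_bdd n lam ((k : ℕ) + 1) hKn) ⟨CtoD U, hU.2.2, CtoD W, hWB.2.2, hfl⟩
  obtain ⟨c, hc⟩ := ht
  have hnn : 0 ≤ tkval n lam ((k : ℕ) + 1) + (a - b) + (c : ℤ) := by omega
  refine ⟨(tkval n lam ((k : ℕ) + 1) + (a - b) + (c : ℤ)).toNat, ?_⟩
  rw [hd, hc]
  have hcast : (((tkval n lam ((k : ℕ) + 1) + (a - b) + (c : ℤ)).toNat : ℕ) : ℂ) =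
      ((tkval n lam ((k : ℕ) + 1) : ℤ) : ℂ) + ((a : ℂ) - (b : ℂ)) + (c : ℂ) := by
    have h1 : (((tkval n lam ((k : ℕ) + 1) + (a - b) + (c : ℤ)).toNat : ℕ) : ℤ) =
        tkval n lam ((k : ℕ) + 1) + (a - b) + (c : ℤ) := Int.toNat_of_nonneg hnn
    have h2 : (((tkval n lam ((k : ℕ) + 1) + (a - b) + (c : ℤ)).toNat : ℕ) : ℂ) =
        ((((tkval n lam ((k : ℕ) + 1) + (a - b) + (c : ℤ)).toNat : ℕ) : ℤ) : ℂ) := by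
      norm_cast
    rw [h2, h1]
    push_cast
    ring
  rw [hcast]
  ring


end GTpaper
end
end
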